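/- (Basic Perturbation Lemma, part 6.) Under the perturbation setup, the side condition f_δ ∘ φ_δ = 0 holds. -/

import Mathlib

open LinearMap

/-- Basic Perturbation Lemma, part 6: `f_δ ∘ φ_δ = 0`. -/
theorem bpl_fδ_φδ
    (R : Type*) [CommRing R] (N M : Type*)
    [AddCommGroup N] [Module R N] [AddCommGroup M] [Module R M]
    (dN : N →ₗ[R] N) (dM : M →ₗ[R] M)
    (hdN : dN ∘ₗ dN = 0) (hdM : dM ∘ₗ dM = 0)
    (f : N →ₗ[R] M) (g : M →ₗ[R] N) (φ : N →ₗ[R] N)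
    (hf : f ∘ₗ dN = dM ∘ₗ f) (hg : g ∘ₗ dM = dN ∘ₗ g)
    (hfg : f ∘ₗ g = LinearMap.id)
    (hhom : φ ∘ₗ dN + dN ∘ₗ φ + g ∘ₗ f = LinearMap.id)
    (hfφ : f ∘ₗ φ = 0) (hφg : φ ∘ₗ g = 0) (hφφ : φ ∘ₗ φ = 0)
    (δ : N →ₗ[R] N) (hδ : (dN + δ) ∘ₗ (dN + δ) = 0)
    (n : ℕ) (hnil : (φ ∘ₗ δ) ^ n = 0) :
    (f ∘ₗ (LinearMap.id - δ ∘ₗ (∑ i ∈ Finset.range n, ((-1 : R) ^ i • (φ ∘ₗ δ) ^ i)) ∘ₗ φ)) ∘ₗ ((∑ i ∈ Finset.range n, ((-1 : R) ^ i • (φ ∘ₗ δ) ^ i)) ∘ₗ φ) = 0 := by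
  have hφpow : ∀ i : ℕ, φ ∘ₗ (((φ ∘ₗ δ) ^ i : N →ₗ[R] N) ∘ₗ φ) = 0 := by
    intro i
    cases i with
    | zero => simpa [Module.End.one_eq_id] using hφφ
    | succ k =>
        rw [pow_succ', Module.End.mul_eq_comp]
        rw [show φ ∘ₗ (((φ ∘ₗ δ) ∘ₗ (φ ∘ₗ δ) ^ k) ∘ₗ φ) = (φ ∘ₗ φ) ∘ₗ (δ ∘ₗ ((φ ∘ₗ δ) ^ k) ∘ₗ φ) by
          simp only [comp_assoc]]
        rw [hφφ, zero_comp]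
  have hfpow : ∀ i : ℕ, f ∘ₗ (((φ ∘ₗ δ) ^ i : N →ₗ[R] N) ∘ₗ φ) = 0 := by
    intro i
    cases i with
    | zero => simpa [Module.End.one_eq_id] using hfφ
    | succ k =>
        rw [pow_succ', Module.End.mul_eq_comp]
        rw [show f ∘ₗ (((φ ∘ₗ δ) ∘ₗ (φ ∘ₗ δ) ^ k) ∘ₗ φ) = (f ∘ₗ φ) ∘ₗ (δ ∘ₗ ((φ ∘ₗ δ) ^ k) ∘ₗ φ) by
          simp only [comp_assoc]]
        rw [hfφ, zero_comp]
  have hφS : φ ∘ₗ ((∑ i ∈ Finset.range n, ((-1 : R) ^ i • (φ ∘ₗ δ) ^ i)) ∘ₗ φ) = 0 := by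
    ext x
    simp only [comp_apply, LinearMap.sum_apply, LinearMap.smul_apply, map_sum, map_smul, LinearMap.zero_apply]
    refine Finset.sum_eq_zero fun i _ => ?_
    have h := LinearMap.congr_fun (hφpow i) x
    simp only [comp_apply, LinearMap.zero_apply] at h
    rw [h, smul_zero]
  have hfS : f ∘ₗ ((∑ i ∈ Finset.range n, ((-1 : R) ^ i • (φ ∘ₗ δ) ^ i)) ∘ₗ φ) = 0 := by
    ext x
    simp only [comp_apply, LinearMap.sum_apply, LinearMap.smul_apply, map_sum, map_smul, LinearMap.zero_apply]
    refine Finset.sum_eq_zero fun i _ => ?_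
    have h := LinearMap.congr_fun (hfpow i) x
    simp only [comp_apply, LinearMap.zero_apply] at h
    rw [h, smul_zero]
  have expand : (f ∘ₗ (LinearMap.id - δ ∘ₗ (∑ i ∈ Finset.range n, ((-1 : R) ^ i • (φ ∘ₗ δ) ^ i)) ∘ₗ φ)) ∘ₗ ((∑ i ∈ Finset.range n, ((-1 : R) ^ i • (φ ∘ₗ δ) ^ i)) ∘ₗ φ)
      = f ∘ₗ ((∑ i ∈ Finset.range n, ((-1 : R) ^ i • (φ ∘ₗ δ) ^ i)) ∘ₗ φ)
        - (f ∘ₗ δ ∘ₗ (∑ i ∈ Finset.range n, ((-1 : R) ^ i • (φ ∘ₗ δ) ^ i)))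
            ∘ₗ (φ ∘ₗ ((∑ i ∈ Finset.range n, ((-1 : R) ^ i • (φ ∘ₗ δ) ^ i)) ∘ₗ φ)) := by
    simp only [comp_sub, sub_comp, id_comp, comp_assoc]
  rw [expand, hfS, hφS, comp_zero, sub_zero]
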